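/- Let Π and G be profinite groups, π : Π → G a continuous surjective homomorphism with kernel Δ, and (G_v)_{v∈S} a family of closed subgroups of G. Let (Δ(i))_{i≥0} be the closed derived series of Δ (each Δ(i) is then a closed subgroup of Π normal in Π), and set K = ⋂_{i≥0} Δ(i). Assume that for every i ≥ 1, any two continuous sections of the induced surjection Π/Δ(i) → G whose restrictions to each G_v (v ∈ S) are conjugate by an element of Δ/Δ(i) are conjugate by an element of Δ/Δ(i). Then any two continuous sections of the induced surjection Π/K → G whose restrictions to each G_v (v ∈ S) are conjugate by an element of Δ/K are conjugate by an element of Δ/K. -/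

import Mathlib

/-- The closed derived series of the kernel of a homomorphism `π : P → G`, as subgroups of
`P` : `Δ(0) = ker π`, `Δ(i+1)` is the topological closure of `[Δ(i), Δ(i)]`. -/
def kerClosedDerivedSeries {P G : Type*} [Group P] [TopologicalSpace P] [IsTopologicalGroup P]
    [Group G] (π : P →* G) : ℕ → Subgroup P
  | 0 => π.ker
  | i + 1 =>
      (⁅kerClosedDerivedSeries π i, kerClosedDerivedSeries π i⁆ : Subgroup P).topologicalClosure

/-- Let `π : P → G` be a continuous surjective homomorphism of profinite
groups with kernel `Δ`, `(G_v)_{v ∈ S}` a family of closed subgroups of `G`, `(Δ(i))` the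
closed derived series of `Δ`, and `K = ⋂ i, Δ(i)`. The quotients `P/Δ(i)` are realized by
profinite groups `Q i` with continuous surjections `q i` of kernel `Δ(i)` and induced
surjections `πq i : Q i → G`; the quotient `P/K` is realized by `QK` with `qK`, `πK`
similarly. Assume that for every `i ≥ 1`, any two continuous sections of `πq i` whose
restrictions to each `G_v` are conjugate by an element of `Δ/Δ(i) = ker (πq i)` are conjugate
by an element of `ker (πq i)`. Then any two continuous sections of `πK` whose restrictions to
each `G_v` are conjugate by an element of `Δ/K = ker πK` are conjugate by an element of
`ker πK`. -/
theorem local_global_conj_descends_to_prosolvable_quotient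
    {P G : Type*} [Group P] [TopologicalSpace P] [IsTopologicalGroup P]
    [CompactSpace P] [T2Space P] [TotallyDisconnectedSpace P]
    [Group G] [TopologicalSpace G] [IsTopologicalGroup G]
    [CompactSpace G] [T2Space G] [TotallyDisconnectedSpace G]
    (π : P →* G) (hπcont : Continuous π) (hπsurj : Function.Surjective π)
    {S : Type*} (Gv : S → Subgroup G) (hGv : ∀ v, IsClosed (Gv v : Set G))
    (Q : ℕ → Type*) [∀ i, Group (Q i)] [∀ i, TopologicalSpace (Q i)]
    [∀ i, IsTopologicalGroup (Q i)] [∀ i, CompactSpace (Q i)] [∀ i, T2Space (Q i)]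
    [∀ i, TotallyDisconnectedSpace (Q i)]
    (q : ∀ i, P →* Q i) (hqcont : ∀ i, Continuous (q i))
    (hqsurj : ∀ i, Function.Surjective (q i))
    (hqker : ∀ i, (q i).ker = kerClosedDerivedSeries π i)
    (πq : ∀ i, Q i →* G) (hπq : ∀ i x, πq i (q i x) = π x)
    (QK : Type*) [Group QK] [TopologicalSpace QK] [IsTopologicalGroup QK]
    [CompactSpace QK] [T2Space QK] [TotallyDisconnectedSpace QK]
    (qK : P →* QK) (hqKcont : Continuous qK) (hqKsurj : Function.Surjective qK)
    (hqKker : qK.ker = ⨅ i, kerClosedDerivedSeries π i)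
    (πK : QK →* G) (hπK : ∀ x, πK (qK x) = π x)
    (hloc : ∀ i, 1 ≤ i → ∀ α β : G →* Q i, Continuous α → Continuous β →
      (∀ g, πq i (α g) = g) → (∀ g, πq i (β g) = g) →
      (∀ v, ∃ δ ∈ (πq i).ker, ∀ g ∈ Gv v, δ * α g * δ⁻¹ = β g) →
      ∃ δ ∈ (πq i).ker, ∀ g, δ * α g * δ⁻¹ = β g) :
    ∀ α β : G →* QK, Continuous α → Continuous β →
      (∀ g, πK (α g) = g) → (∀ g, πK (β g) = g) →
      (∀ v, ∃ δ ∈ πK.ker, ∀ g ∈ Gv v, δ * α g * δ⁻¹ = β g) →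
      ∃ δ ∈ πK.ker, ∀ g, δ * α g * δ⁻¹ = β g := by
  -- Preliminaries on the derived series
  intro α β hαc hβc hαsec hβsec hlocal
  have hΔclosed : ∀ i, IsClosed ((kerClosedDerivedSeries π i : Subgroup P) : Set P) := by
    intro i
    cases i with
    | zero =>
        show IsClosed ((π.ker : Subgroup P) : Set P)
        have : ((π.ker : Subgroup P) : Set P) = π ⁻¹' {1} := rfl
        rw [this]
        exact isClosed_singleton.preimage hπcont
    | succ i => exact Subgroup.isClosed_topologicalClosure _
  have hΔle : ∀ i, kerClosedDerivedSeries π (i + 1) ≤ kerClosedDerivedSeries π i := by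
    intro i
    refine Subgroup.topologicalClosure_minimal _ ?_ (hΔclosed i)
    refine Subgroup.commutator_le.2 fun g₁ hg₁ g₂ hg₂ => ?_
    rw [commutatorElement_def]
    exact mul_mem (mul_mem (mul_mem hg₁ hg₂) (inv_mem hg₁)) (inv_mem hg₂)
  have hker_le : ∀ i, qK.ker ≤ (q i).ker := by
    intro i
    rw [hqKker, hqker]
    exact iInf_le _ i
  have hkey : ∀ i (p p' : P), qK p = qK p' → q i p = q i p' := by
    intro i p p' h
    have h1 : p * p'⁻¹ ∈ qK.ker := by
      rw [MonoidHom.mem_ker, map_mul, map_inv, h, mul_inv_cancel]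
    have h2 : p * p'⁻¹ ∈ (q i).ker := hker_le i h1
    rw [MonoidHom.mem_ker, map_mul, map_inv, mul_inv_eq_one] at h2
    exact h2
  -- The induced maps `r i : QK →* Q i`
  have hexr : ∀ i, ∃ r : QK →* Q i, ∀ p, r (qK p) = q i p := by
    intro i
    refine ⟨{ toFun := fun x => q i (Function.surjInv hqKsurj x),
              map_one' := ?_, map_mul' := ?_ }, ?_⟩
    · have : q i (Function.surjInv hqKsurj 1) = q i 1 :=
        hkey i _ _ (by rw [Function.surjInv_eq hqKsurj, map_one])
      simpa using this
    · intro x y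
      have : q i (Function.surjInv hqKsurj (x * y)) =
          q i (Function.surjInv hqKsurj x * Function.surjInv hqKsurj y) :=
        hkey i _ _ (by rw [Function.surjInv_eq hqKsurj, map_mul,
          Function.surjInv_eq hqKsurj, Function.surjInv_eq hqKsurj])
      simpa [map_mul] using this
    · intro p
      exact hkey i _ _ (Function.surjInv_eq hqKsurj (qK p))
  choose r hr using hexr
  have hqKquot : Topology.IsQuotientMap qK := (hqKcont.isClosedMap).isQuotientMap hqKcont hqKsurj
  have hrcont : ∀ i, Continuous (r i) := by
    intro i
    rw [hqKquot.continuous_iff]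
    have : (r i) ∘ qK = q i := funext fun p => hr i p
    rw [this]
    exact hqcont i
  have hπKcont : Continuous πK := by
    rw [hqKquot.continuous_iff]
    have : πK ∘ qK = π := funext fun p => hπK p
    rw [this]
    exact hπcont
  have hπqr : ∀ i (x : QK), πq i (r i x) = πK x := by
    intro i x
    obtain ⟨p, rfl⟩ := hqKsurj x
    rw [hr, hπq, hπK]
  -- the sets of local conjugators at each finite level
  set C : ℕ → Set QK := fun n =>
    {δ | δ ∈ πK.ker ∧ ∀ g, r (n + 1) (δ * α g * δ⁻¹ * (β g)⁻¹) = 1} with hC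
  have hCclosed : ∀ n, IsClosed (C n) := by
    intro n
    have h1 : IsClosed {δ : QK | δ ∈ πK.ker} :=
      (isClosed_singleton.preimage hπKcont : IsClosed (πK ⁻¹' {1}))
    have h2 : IsClosed {δ : QK | ∀ g, r (n + 1) (δ * α g * δ⁻¹ * (β g)⁻¹) = 1} := by
      rw [Set.setOf_forall]
      refine isClosed_iInter fun g => isClosed_eq ?_ continuous_const
      exact (hrcont (n + 1)).comp
        (((continuous_id.mul continuous_const).mul continuous_inv).mul continuous_const)
    exact h1.inter h2
  have hCnonempty : ∀ n, (C n).Nonempty := by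
    intro n
    have hsecα : ∀ g, πq (n + 1) ((r (n + 1)).comp α g) = g := fun g => by
      rw [MonoidHom.comp_apply, hπqr, hαsec]
    have hsecβ : ∀ g, πq (n + 1) ((r (n + 1)).comp β g) = g := fun g => by
      rw [MonoidHom.comp_apply, hπqr, hβsec]
    have hlocn : ∀ v, ∃ δ ∈ (πq (n + 1)).ker,
        ∀ g ∈ Gv v, δ * (r (n + 1)).comp α g * δ⁻¹ = (r (n + 1)).comp β g := by
      intro v
      obtain ⟨δ, hδker, hδ⟩ := hlocal v
      refine ⟨r (n + 1) δ, ?_, ?_⟩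
      · rw [MonoidHom.mem_ker, hπqr]
        exact hδker
      · intro g hg
        have := congrArg (r (n + 1)) (hδ g hg)
        simpa [map_mul, map_inv] using this
    obtain ⟨δi, hδiker, hδi⟩ := hloc (n + 1) (Nat.le_add_left 1 n)
      ((r (n + 1)).comp α) ((r (n + 1)).comp β)
      ((hrcont (n + 1)).comp hαc) ((hrcont (n + 1)).comp hβc) hsecα hsecβ hlocn
    obtain ⟨p, hp⟩ := hqsurj (n + 1) δi
    refine ⟨qK p, ?_, ?_⟩
    · show qK p ∈ πK.ker
      rw [MonoidHom.mem_ker, hπK, ← hπq (n + 1), hp]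
      exact hδiker
    · intro g
      have h := hδi g
      simp only [MonoidHom.comp_apply] at h
      rw [map_mul, map_mul, map_mul, map_inv, map_inv, hr, hp, h, mul_inv_cancel]
  have hCsub : ∀ n, C (n + 1) ⊆ C n := by
    intro n δ hδ
    refine ⟨hδ.1, fun g => ?_⟩
    have h := hδ.2 g
    obtain ⟨p, hp⟩ := hqKsurj (δ * α g * δ⁻¹ * (β g)⁻¹)
    rw [← hp, hr] at h ⊢
    have : p ∈ (q (n + 2)).ker := h
    rw [hqker] at this
    have : p ∈ kerClosedDerivedSeries π (n + 1) := hΔle (n + 1) this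
    rw [← hqker] at this
    exact this
  -- compactness: take a common conjugator
  obtain ⟨δ, hδ⟩ := IsCompact.nonempty_iInter_of_sequence_nonempty_isCompact_isClosed
    C hCsub hCnonempty ((hCclosed 0).isCompact) hCclosed
  simp only [Set.mem_iInter] at hδ
  refine ⟨δ, (hδ 0).1, fun g => ?_⟩
  obtain ⟨p, hp⟩ := hqKsurj (δ * α g * δ⁻¹ * (β g)⁻¹)
  have hp1 : p ∈ ⨅ i, kerClosedDerivedSeries π i := by
    rw [Subgroup.mem_iInf]
    intro i
    cases i with
    | zero =>
        have h := (hδ 0).2 g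
        rw [← hp, hr] at h
        have : p ∈ (q 1).ker := h
        rw [hqker] at this
        exact hΔle 0 this
    | succ i =>
        have h := (hδ i).2 g
        rw [← hp, hr] at h
        have : p ∈ (q (i + 1)).ker := h
        rw [hqker] at this
        exact this
  rw [← hqKker, MonoidHom.mem_ker] at hp1
  rw [hp1] at hp
  exact mul_inv_eq_one.mp hp.symm
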